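/- For the shared pure state ρ_{β,γ} (β, γ : ℝ with β² + γ² ≠ 0), the post-selected outcome probabilities for Bob's σy measurement satisfy P₊(Π_y) − P₋(Π_y) = 8·β·γ·sin α / ((β² + γ²)·(−3 + cos(2α))), provided Re(trace ρ₊) ≠ 0 and Re(trace ρ₋) ≠ 0. In particular the difference vanishes exactly when β·γ·sin α = 0. -/

import Mathlib

open Matrix Kronecker Complex
open scoped ComplexOrder

noncomputable section

/-- Pauli matrix `σx`. -/
def σx : Matrix (Fin 2) (Fin 2) ℂ := !![0, 1; 1, 0]

/-- Pauli matrix `σy`. -/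
def σy : Matrix (Fin 2) (Fin 2) ℂ := !![0, -Complex.I; Complex.I, 0]

/-- Pauli matrix `σz`. -/
def σz : Matrix (Fin 2) (Fin 2) ℂ := !![1, 0; 0, -1]

/-- The simulated PT-symmetric evolution operator at the chosen time. -/
def Upt (α : ℝ) : Matrix (Fin 2) (Fin 2) ℂ :=
  !![(Real.sin α : ℂ), -Complex.I; -Complex.I, -(Real.sin α : ℂ)]

/-- Alice's operation `A₊` (do nothing). -/
def Apos : Matrix (Fin 2) (Fin 2) ℂ := 1

/-- Alice's operation `A₋` (bit flip `σx`). -/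
def Aneg : Matrix (Fin 2) (Fin 2) ℂ := σx

/-- Unnormalized post-selected state after Alice applies `A₊` followed by the
simulated PT evolution. -/
def postPlus (α : ℝ) (ρ : Matrix (Fin 2 × Fin 2) (Fin 2 × Fin 2) ℂ) :
    Matrix (Fin 2 × Fin 2) (Fin 2 × Fin 2) ℂ :=
  ((Upt α * Apos) ⊗ₖ (1 : Matrix (Fin 2) (Fin 2) ℂ)) * ρ *
    ((Upt α * Apos) ⊗ₖ (1 : Matrix (Fin 2) (Fin 2) ℂ))ᴴ

/-- Unnormalized post-selected state after Alice applies `A₋` followed by the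
simulated PT evolution. -/
def postMinus (α : ℝ) (ρ : Matrix (Fin 2 × Fin 2) (Fin 2 × Fin 2) ℂ) :
    Matrix (Fin 2 × Fin 2) (Fin 2 × Fin 2) ℂ :=
  ((Upt α * Aneg) ⊗ₖ (1 : Matrix (Fin 2) (Fin 2) ℂ)) * ρ *
    ((Upt α * Aneg) ⊗ₖ (1 : Matrix (Fin 2) (Fin 2) ℂ))ᴴ

/-- Probability that Bob obtains outcome `Π` given Alice applied `A₊`. -/
def Pplus (α : ℝ) (ρ : Matrix (Fin 2 × Fin 2) (Fin 2 × Fin 2) ℂ)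
    (Pi : Matrix (Fin 2) (Fin 2) ℂ) : ℝ :=
  ((((1 : Matrix (Fin 2) (Fin 2) ℂ) ⊗ₖ Pi) * postPlus α ρ).trace).re /
    ((postPlus α ρ).trace).re

/-- Probability that Bob obtains outcome `Π` given Alice applied `A₋`. -/
def Pminus (α : ℝ) (ρ : Matrix (Fin 2 × Fin 2) (Fin 2 × Fin 2) ℂ)
    (Pi : Matrix (Fin 2) (Fin 2) ℂ) : ℝ :=
  ((((1 : Matrix (Fin 2) (Fin 2) ℂ) ⊗ₖ Pi) * postMinus α ρ).trace).re /
    ((postMinus α ρ).trace).re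

/-- Bob's `σy`-measurement projector onto `|+_y⟩ = (|0⟩ + i|1⟩)/√2`. -/
def Piy : Matrix (Fin 2) (Fin 2) ℂ :=
  (1/2 : ℂ) • !![1, -Complex.I; Complex.I, 1]

/-- Bob's rank-one projector `Π(z,u)` for an arbitrary projective measurement. -/
def Pizu (z u : ℝ) : Matrix (Fin 2) (Fin 2) ℂ :=
  !![((Real.cos (z/2))^2 : ℂ),
     (Real.cos (z/2) : ℂ) * (Real.sin (z/2) : ℂ) * Complex.exp (-(Complex.I * u));
     (Real.cos (z/2) : ℂ) * (Real.sin (z/2) : ℂ) * Complex.exp (Complex.I * u),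
     ((Real.sin (z/2))^2 : ℂ)]

/-- The single-qubit state `|+⟩ = (|0⟩ + |1⟩)/√2`. -/
def ketPlus : Fin 2 → ℂ := ![((1 / Real.sqrt 2 : ℝ) : ℂ), ((1 / Real.sqrt 2 : ℝ) : ℂ)]

/-- The single-qubit state `|−⟩ = (|0⟩ − |1⟩)/√2`. -/
def ketMinus : Fin 2 → ℂ := ![((1 / Real.sqrt 2 : ℝ) : ℂ), ((-(1 / Real.sqrt 2) : ℝ) : ℂ)]

/-- The (normalized) pure state `|ψ_{β,γ}⟩ = (β|++⟩ + γ|−−⟩)/√(β²+γ²)`. -/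
def ψpure (β γ : ℝ) : Fin 2 × Fin 2 → ℂ := fun q =>
  ((β : ℂ) * (ketPlus q.1 * ketPlus q.2) + (γ : ℂ) * (ketMinus q.1 * ketMinus q.2)) /
    ((Real.sqrt (β^2 + γ^2) : ℝ) : ℂ)

/-- The pure two-qubit density matrix `ρ_{β,γ} = |ψ_{β,γ}⟩⟨ψ_{β,γ}|`. -/
def ρpure (β γ : ℝ) : Matrix (Fin 2 × Fin 2) (Fin 2 × Fin 2) ℂ :=
  Matrix.vecMulVec (ψpure β γ) (fun q => starRingEnd ℂ (ψpure β γ q))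

/-- The maximally entangled state `|ψ⁺⟩ = (|00⟩ + |11⟩)/√2`. -/
def ψmax : Fin 2 × Fin 2 → ℂ := fun q =>
  if q.1 = q.2 then ((1 / Real.sqrt 2 : ℝ) : ℂ) else 0

/-- The two-qubit Werner state `ρ_W(p) = p |ψ⁺⟩⟨ψ⁺| + ((1-p)/4) 1`. -/
def ρWerner (p : ℝ) : Matrix (Fin 2 × Fin 2) (Fin 2 × Fin 2) ℂ :=
  (p : ℂ) • Matrix.vecMulVec ψmax (fun q => starRingEnd ℂ (ψmax q)) +
    (((1 - p) / 4 : ℝ) : ℂ) • 1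

/-- The canonical two-qubit state with magnetizations `mx my mz` (Alice),
`nx ny nz` (Bob) and diagonal correlators `Cxx Cyy Czz`. -/
def ρcan (mx my mz nx ny nz Cxx Cyy Czz : ℝ) :
    Matrix (Fin 2 × Fin 2) (Fin 2 × Fin 2) ℂ :=
  (1/4 : ℂ) • ((1 : Matrix (Fin 2 × Fin 2) (Fin 2 × Fin 2) ℂ)
    + (mx : ℂ) • (σx ⊗ₖ (1 : Matrix (Fin 2) (Fin 2) ℂ))
    + (my : ℂ) • (σy ⊗ₖ (1 : Matrix (Fin 2) (Fin 2) ℂ))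
    + (mz : ℂ) • (σz ⊗ₖ (1 : Matrix (Fin 2) (Fin 2) ℂ))
    + (nx : ℂ) • ((1 : Matrix (Fin 2) (Fin 2) ℂ) ⊗ₖ σx)
    + (ny : ℂ) • ((1 : Matrix (Fin 2) (Fin 2) ℂ) ⊗ₖ σy)
    + (nz : ℂ) • ((1 : Matrix (Fin 2) (Fin 2) ℂ) ⊗ₖ σz)
    + (Cxx : ℂ) • (σx ⊗ₖ σx)
    + (Cyy : ℂ) • (σy ⊗ₖ σy)
    + (Czz : ℂ) • (σz ⊗ₖ σz))

/-- Bob's reduced matrix: the partial trace over Alice's subsystem. -/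
def ptraceA (X : Matrix (Fin 2 × Fin 2) (Fin 2 × Fin 2) ℂ) :
    Matrix (Fin 2) (Fin 2) ℂ :=
  Matrix.of fun i j => ∑ k : Fin 2, X (k, i) (k, j)

/-- The trace distance `T(A,B) = (1/2) tr √((A-B)ᴴ (A-B))`, where the square
root is the positive semidefinite square root. -/
def traceDist (A B : Matrix (Fin 2) (Fin 2) ℂ) : ℝ :=
  (1/2) * ((((Matrix.posSemidef_conjTranspose_mul_self (A - B)).1.eigenvectorUnitary.1 *
    diagonal (((↑) : ℝ → ℂ) ∘ (Real.sqrt ·) ∘ (Matrix.posSemidef_conjTranspose_mul_self (A - B)).1.eigenvalues) *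
    (star (Matrix.posSemidef_conjTranspose_mul_self (A - B)).1.eigenvectorUnitary :
      Matrix (Fin 2) (Fin 2) ℂ))).trace).re

def wv (β γ : ℝ) : Fin 2 × Fin 2 → ℂ := fun q =>
  !![((β:ℂ)+γ)/2, ((β:ℂ)-γ)/2; ((β:ℂ)-γ)/2, ((β:ℂ)+γ)/2] q.1 q.2

lemma ψpure_eq (β γ : ℝ) :
    ψpure β γ = fun q => wv β γ q / ((Real.sqrt (β^2+γ^2) : ℝ) : ℂ) := by
  funext q
  have h2 : ((Real.sqrt 2 : ℝ) : ℂ)⁻¹ * ((Real.sqrt 2 : ℝ) : ℂ)⁻¹ = (2:ℂ)⁻¹ := by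
    rw [← mul_inv, ← Complex.ofReal_mul, Real.mul_self_sqrt (by norm_num)]; norm_num
  fin_cases q <;>
    simp [ψpure, ketPlus, ketMinus, wv] <;>
    rw [h2] <;> congr 1 <;> ring

lemma ρpure_eq (β γ : ℝ) :
    ρpure β γ = ((β^2+γ^2 : ℝ) : ℂ)⁻¹ •
      Matrix.vecMulVec (wv β γ) (fun q => starRingEnd ℂ (wv β γ q)) := by
  have hs : ((Real.sqrt (β^2+γ^2) : ℝ) : ℂ) * ((Real.sqrt (β^2+γ^2) : ℝ) : ℂ)
      = ((β^2+γ^2 : ℝ) : ℂ) := by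
    rw [← Complex.ofReal_mul, Real.mul_self_sqrt (by positivity)]
  ext q q'
  simp only [ρpure, Matrix.vecMulVec_apply, ψpure_eq, Matrix.smul_apply, smul_eq_mul,
    map_div₀, Complex.conj_ofReal]
  rw [div_mul_div_comm, hs, div_eq_inv_mul]
lemma trP (α β γ : ℝ) :
    (postPlus α (Matrix.vecMulVec (wv β γ) (fun q => starRingEnd ℂ (wv β γ q)))).trace
      = (((β^2+γ^2) * (1 + Real.sin α^2) : ℝ) : ℂ) := by
  simp [postPlus, Matrix.trace, Matrix.mul_apply, Fintype.sum_prod_type, Fin.sum_univ_two,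
    Upt, Apos, Matrix.kroneckerMap_apply, Matrix.vecMulVec_apply, Matrix.one_apply, wv,
    Matrix.conjTranspose_apply, map_div₀, Complex.conj_ofReal, Matrix.diag, map_ofNat,
    Complex.ofReal_mul, Complex.ofReal_add, Complex.ofReal_pow, Complex.ofReal_one,
    -Complex.ofReal_sin]
  ring_nf
  simp [Complex.I_sq]
lemma trM (α β γ : ℝ) :
    (postMinus α (Matrix.vecMulVec (wv β γ) (fun q => starRingEnd ℂ (wv β γ q)))).trace
      = (((β^2+γ^2) * (1 + Real.sin α^2) : ℝ) : ℂ) := by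
  simp [postMinus, Matrix.trace, Matrix.mul_apply, Fintype.sum_prod_type, Fin.sum_univ_two,
    Upt, Aneg, σx, Matrix.kroneckerMap_apply, Matrix.vecMulVec_apply, Matrix.one_apply, wv,
    Matrix.conjTranspose_apply, map_div₀, Complex.conj_ofReal, Matrix.diag, map_ofNat,
    Complex.ofReal_mul, Complex.ofReal_add, Complex.ofReal_pow, Complex.ofReal_one,
    -Complex.ofReal_sin]
  ring_nf
  simp [Complex.I_sq]
  ring_nf

lemma numP (α β γ : ℝ) :
    ((((1 : Matrix (Fin 2) (Fin 2) ℂ) ⊗ₖ Piy) *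
      postPlus α (Matrix.vecMulVec (wv β γ) (fun q => starRingEnd ℂ (wv β γ q)))).trace)
      = ((((β^2+γ^2)/2) * (1 + Real.sin α^2) - 2 * Real.sin α * β * γ : ℝ) : ℂ) := by
  simp [postPlus, Piy, Matrix.trace, Matrix.mul_apply, Fintype.sum_prod_type, Fin.sum_univ_two,
    Upt, Apos, Matrix.kroneckerMap_apply, Matrix.vecMulVec_apply, Matrix.one_apply, wv,
    Matrix.conjTranspose_apply, map_div₀, Complex.conj_ofReal, Matrix.diag, map_ofNat,
    Matrix.smul_apply, smul_eq_mul,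
    Complex.ofReal_mul, Complex.ofReal_add, Complex.ofReal_pow, Complex.ofReal_one,
    Complex.ofReal_div, Complex.ofReal_sub, Complex.ofReal_ofNat,
    -Complex.ofReal_sin]
  ring_nf
  simp [Complex.I_sq]
  ring_nf

lemma numM (α β γ : ℝ) :
    ((((1 : Matrix (Fin 2) (Fin 2) ℂ) ⊗ₖ Piy) *
      postMinus α (Matrix.vecMulVec (wv β γ) (fun q => starRingEnd ℂ (wv β γ q)))).trace)
      = ((((β^2+γ^2)/2) * (1 + Real.sin α^2) + 2 * Real.sin α * β * γ : ℝ) : ℂ) := by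
  simp [postMinus, Piy, Matrix.trace, Matrix.mul_apply, Fintype.sum_prod_type, Fin.sum_univ_two,
    Upt, Aneg, σx, Matrix.kroneckerMap_apply, Matrix.vecMulVec_apply, Matrix.one_apply, wv,
    Matrix.conjTranspose_apply, map_div₀, Complex.conj_ofReal, Matrix.diag, map_ofNat,
    Matrix.smul_apply, smul_eq_mul,
    Complex.ofReal_mul, Complex.ofReal_add, Complex.ofReal_pow, Complex.ofReal_one,
    Complex.ofReal_div, Complex.ofReal_sub, Complex.ofReal_ofNat,
    -Complex.ofReal_sin]
  ring_nf
  simp [Complex.I_sq]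
  ring_nf
lemma postPlus_smul (α : ℝ) (c : ℂ) (X : Matrix (Fin 2 × Fin 2) (Fin 2 × Fin 2) ℂ) :
    postPlus α (c • X) = c • postPlus α X := by
  simp [postPlus, Matrix.mul_smul, Matrix.smul_mul]

lemma postMinus_smul (α : ℝ) (c : ℂ) (X : Matrix (Fin 2 × Fin 2) (Fin 2 × Fin 2) ℂ) :
    postMinus α (c • X) = c • postMinus α X := by
  simp [postMinus, Matrix.mul_smul, Matrix.smul_mul]


/-- For the shared pure state `ρ_{β,γ}`, Bob's `σy` outcome probabilities satisfy
`P₊(Π_y) − P₋(Π_y) = 8βγ sin α / ((β²+γ²)(−3 + cos 2α))`; in particular the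
difference vanishes exactly when `βγ sin α = 0`. -/
theorem stmt4 (α β γ : ℝ) (hβγ : β^2 + γ^2 ≠ 0)
    (hplus : ((postPlus α (ρpure β γ)).trace).re ≠ 0)
    (hminus : ((postMinus α (ρpure β γ)).trace).re ≠ 0) :
    Pplus α (ρpure β γ) Piy - Pminus α (ρpure β γ) Piy =
      8 * β * γ * Real.sin α / ((β^2 + γ^2) * (-3 + Real.cos (2*α))) ∧
    (Pplus α (ρpure β γ) Piy - Pminus α (ρpure β γ) Piy = 0 ↔
      β * γ * Real.sin α = 0) := by
  have hn : (0:ℝ) < β^2 + γ^2 := lt_of_le_of_ne (by positivity) (Ne.symm hβγ)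
  have hT : (0:ℝ) < 1 + Real.sin α^2 := by positivity
  set n : ℝ := β^2 + γ^2 with hndef
  set s : ℝ := Real.sin α with hsdef
  set X := Matrix.vecMulVec (wv β γ) (fun q => starRingEnd ℂ (wv β γ q)) with hX
  have hρ : ρpure β γ = ((n:ℝ):ℂ)⁻¹ • X := ρpure_eq β γ
  have hre : ∀ z : ℂ, (((n:ℝ):ℂ)⁻¹ * z).re = n⁻¹ * z.re := by
    intro z; rw [← Complex.ofReal_inv, Complex.re_ofReal_mul]
  have eP : ((postPlus α (ρpure β γ)).trace).re = n⁻¹ * (n * (1 + s^2)) := by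
    rw [hρ, postPlus_smul, Matrix.trace_smul, smul_eq_mul, hre, trP, Complex.ofReal_re]
  have eM : ((postMinus α (ρpure β γ)).trace).re = n⁻¹ * (n * (1 + s^2)) := by
    rw [hρ, postMinus_smul, Matrix.trace_smul, smul_eq_mul, hre, trM, Complex.ofReal_re]
  have eNP : ((((1 : Matrix (Fin 2) (Fin 2) ℂ) ⊗ₖ Piy) * postPlus α (ρpure β γ)).trace).re
      = n⁻¹ * (n/2 * (1 + s^2) - 2*s*β*γ) := by
    rw [hρ, postPlus_smul, Matrix.mul_smul, Matrix.trace_smul, smul_eq_mul, hre, numP,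
      Complex.ofReal_re]
  have eNM : ((((1 : Matrix (Fin 2) (Fin 2) ℂ) ⊗ₖ Piy) * postMinus α (ρpure β γ)).trace).re
      = n⁻¹ * (n/2 * (1 + s^2) + 2*s*β*γ) := by
    rw [hρ, postMinus_smul, Matrix.mul_smul, Matrix.trace_smul, smul_eq_mul, hre, numM,
      Complex.ofReal_re]
  have key : Pplus α (ρpure β γ) Piy - Pminus α (ρpure β γ) Piy
      = -(4*(β*γ*s)) / (n * (1 + s^2)) := by
    rw [Pplus, Pminus, eP, eM, eNP, eNM]
    field_simp
    ring
  constructor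
  · rw [key]
    have hc : Real.cos (2*α) = 1 - 2 * s^2 := by
      rw [Real.cos_two_mul, Real.cos_sq']; ring
    rw [hc]
    rw [div_eq_div_iff (by positivity) (by nlinarith [hT, hn])]
    ring
  · rw [key, div_eq_zero_iff]
    constructor
    · rintro (h | h)
      · linarith [neg_eq_zero.mp h]
      · exact absurd h (by positivity)
    · intro h; left; rw [h]; ring
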